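/- With B and ψ the relativised collapsing hierarchy: if γ ∈ B(γ) and δ ∈ B(δ), then γ < δ if and only if ψ(γ) < ψ(δ). -/

import Mathlib

open Ordinal

/-- The binary Veblen function: `veblen 0 β = ω ^ β`, and for `α > 0`,
`veblen α` enumerates the common fixed points of `veblen γ` for `γ < α`. -/
noncomputable def veblen : Ordinal → Ordinal → Ordinal :=
  WellFounded.fix Ordinal.lt_wf
    (fun α ih => if α = 0 then fun β => omega0 ^ β
      else derivFamily.{0} (familyOfBFamily α (fun ξ h => ih ξ h)))

/-- The set of strongly critical ordinals. -/
def StronglyCritical (γ : Ordinal) : Prop := _root_.veblen γ 0 = γ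

/-- `Gamma β` is the `β`-th strongly critical ordinal. -/
noncomputable def Gamma : Ordinal → Ordinal :=
  enumOrd {γ | StronglyCritical γ}

/-- The least uncountable cardinal (as an ordinal) greater than `θ`. -/
noncomputable def OmegaB (θ : Ordinal) : Ordinal :=
  sInf {o | θ < o ∧ o.card.ord = o ∧ Cardinal.aleph0 < o.card}

/-- Closure of `{0, Ω} ∪ {Γ_β : β ≤ θ}` under `+`, `veblen` and the
given partial collapsing function `f` on arguments below `α`. -/
def closB (θ α : Ordinal) (f : ∀ ξ, ξ < α → Ordinal) : Set Ordinal :=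
  ⋂₀ {S : Set Ordinal |
      0 ∈ S ∧ OmegaB θ ∈ S ∧ (∀ β ≤ θ, Gamma β ∈ S) ∧
      (∀ x ∈ S, ∀ y ∈ S, x + y ∈ S) ∧
      (∀ x ∈ S, ∀ y ∈ S, _root_.veblen x y ∈ S) ∧
      (∀ ξ (h : ξ < α), ξ ∈ S → f ξ h ∈ S)}

/-- The relativised collapsing function `ψ_θ`. -/
noncomputable def psiB (θ : Ordinal) : Ordinal → Ordinal :=
  WellFounded.fix Ordinal.lt_wf
    (fun α ih => sInf {β | β ∉ closB θ α (fun ξ h => ih ξ h)})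

/-- The relativised collapsing hierarchy `B_θ(α)`. -/
def BB (θ α : Ordinal) : Set Ordinal :=
  closB θ α (fun ξ _ => psiB θ ξ)

/-- The least strongly critical ordinal strictly above `δ`. -/
noncomputable def gammaSucc (δ : Ordinal) : Ordinal :=
  sInf {γ | δ < γ ∧ StronglyCritical γ}

lemma psiB_eq (θ α : Ordinal) : psiB θ α = sInf {β | β ∉ BB θ α} := by
  rw [psiB, WellFounded.fix_eq]
  rfl

lemma BB_mono (θ : Ordinal) {α α' : Ordinal} (h : α ≤ α') : BB θ α ⊆ BB θ α' := by
  intro x hx S hS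
  exact hx S ⟨hS.1, hS.2.1, hS.2.2.1, hS.2.2.2.1, hS.2.2.2.2.1,
    fun ξ hξ => hS.2.2.2.2.2 ξ (hξ.trans_le h)⟩

lemma BB_psi_mem (θ : Ordinal) {α ξ : Ordinal} (hξ : ξ < α) (hx : ξ ∈ BB θ α) :
    psiB θ ξ ∈ BB θ α := by
  intro S hS
  exact hS.2.2.2.2.2 ξ hξ (hx S hS)

/-- one closure step -/
noncomputable def stepB (θ α : Ordinal) (s : Set Ordinal) : Set Ordinal :=
  s ∪ ({0, OmegaB θ} ∪ Gamma '' Set.Iic θ) ∪ Set.image2 (· + ·) s s ∪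
    Set.image2 _root_.veblen s s ∪ psiB θ '' (s ∩ Set.Iio α)

lemma subset_stepB (θ α : Ordinal) (s : Set Ordinal) : s ⊆ stepB θ α s :=
  fun x hx => Or.inl (Or.inl (Or.inl (Or.inl hx)))

noncomputable def bigB (θ α : Ordinal) : Set Ordinal :=
  ⋃ n, (stepB θ α)^[n] ∅

lemma iter_subset (θ α : Ordinal) {m n : ℕ} (h : m ≤ n) :
    (stepB θ α)^[m] ∅ ⊆ (stepB θ α)^[n] ∅ := by
  have mono : Monotone (fun k : ℕ => (stepB θ α)^[k] (∅ : Set Ordinal)) :=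
    monotone_nat_of_le_succ fun k => by
      rw [Function.iterate_succ_apply']; exact subset_stepB θ α _
  exact mono h

lemma stepB_small (θ α : Ordinal) (s : Set Ordinal) [Small.{0} s] :
    Small.{0} (stepB θ α s : Set Ordinal) := by
  unfold stepB
  haveI : Small.{0} (s ∩ Set.Iio α : Set Ordinal) := small_subset Set.inter_subset_left
  infer_instance

lemma iter_small (θ α : Ordinal) (n : ℕ) : Small.{0} ((stepB θ α)^[n] ∅ : Set Ordinal) := by
  induction n with
  | zero => simp; infer_instance
  | succ n ih =>
    rw [Function.iterate_succ_apply']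
    haveI := ih
    exact stepB_small θ α _

lemma bigB_small (θ α : Ordinal) : Small.{0} (bigB θ α) := by
  have := iter_small θ α
  exact small_iUnion _

lemma bigB_closed (θ α : Ordinal) : BB θ α ⊆ bigB θ α := by
  have key : ∀ x ∈ bigB θ α, ∀ y ∈ bigB θ α, ∃ n, x ∈ (stepB θ α)^[n] ∅ ∧ y ∈ (stepB θ α)^[n] ∅ := by
    rintro x ⟨_, ⟨m, rfl⟩, hx⟩ y ⟨_, ⟨n, rfl⟩, hy⟩
    exact ⟨max m n, iter_subset θ α (le_max_left m n) hx, iter_subset θ α (le_max_right m n) hy⟩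
  intro x hx
  apply hx
  refine ⟨?_, ?_, ?_, ?_, ?_, ?_⟩
  · exact Set.mem_iUnion.2 ⟨1, Or.inl (Or.inl (Or.inl (Or.inr (Or.inl (Set.mem_insert _ _)))))⟩
  · exact Set.mem_iUnion.2 ⟨1, Or.inl (Or.inl (Or.inl (Or.inr (Or.inl (Or.inr rfl)))))⟩
  · intro β hβ
    exact Set.mem_iUnion.2 ⟨1, Or.inl (Or.inl (Or.inl (Or.inr (Or.inr ⟨β, hβ, rfl⟩))))⟩
  · intro a ha b hb
    obtain ⟨n, h1, h2⟩ := key a ha b hb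
    refine Set.mem_iUnion.2 ⟨n+1, ?_⟩
    rw [Function.iterate_succ_apply']
    exact Or.inl (Or.inl (Or.inr ⟨a, h1, b, h2, rfl⟩))
  · intro a ha b hb
    obtain ⟨n, h1, h2⟩ := key a ha b hb
    refine Set.mem_iUnion.2 ⟨n+1, ?_⟩
    rw [Function.iterate_succ_apply']
    exact Or.inl (Or.inr ⟨a, h1, b, h2, rfl⟩)
  · rintro ξ hξ hmem
    obtain ⟨_, ⟨n, rfl⟩, hx'⟩ := hmem
    refine Set.mem_iUnion.2 ⟨n+1, ?_⟩
    rw [Function.iterate_succ_apply']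
    exact Or.inr ⟨ξ, ⟨hx', hξ⟩, rfl⟩

lemma compl_nonempty (θ α : Ordinal) : {β | β ∉ BB θ α}.Nonempty := by
  have : Small.{0} (bigB θ α) := bigB_small θ α
  obtain ⟨b, hb⟩ := Ordinal.bddAbove_of_small (s := bigB θ α)
  refine ⟨b + 1, fun h => ?_⟩
  have hlt : b < b + 1 := (Order.lt_succ b).trans_eq (Ordinal.add_one_eq_succ b).symm
  exact hlt.not_ge (hb (bigB_closed θ α h))

lemma psiB_not_mem (θ α : Ordinal) : psiB θ α ∉ BB θ α := by
  rw [psiB_eq]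
  exact csInf_mem (compl_nonempty θ α)

lemma psiB_mono (θ : Ordinal) {α α' : Ordinal} (h : α ≤ α') : psiB θ α ≤ psiB θ α' := by
  rw [psiB_eq, psiB_eq]
  exact csInf_le_csInf (OrderBot.bddBelow _) (compl_nonempty θ α')
    (fun β hβ hβ' => hβ (BB_mono θ h hβ'))

theorem stmt15 (θ γ δ : Ordinal) (hγ : γ ∈ BB θ γ) (hδ : δ ∈ BB θ δ) :
    γ < δ ↔ psiB θ γ < psiB θ δ := by
  constructor
  · intro h
    have h1 : psiB θ γ ∈ BB θ δ := BB_psi_mem θ h (BB_mono θ h.le hγ)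
    have h2 : psiB θ δ ∉ BB θ δ := psiB_not_mem θ δ
    exact lt_of_le_of_ne (psiB_mono θ h.le) (fun he => h2 (he ▸ h1))
  · intro h
    by_contra hle
    exact absurd (psiB_mono θ (not_lt.mp hle)) h.not_ge
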